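/- Let n ≥ 1, let g : ℝ → (n×n real matrices) be differentiable at t₀ with det g(t₀) > 0, let A₀ be an n×n real matrix with trace(g(t₀)⁻¹·A₀) = −1, let p₀ ∈ ℝ, and suppose g′(t₀) = −2·A₀ − (2/n + p₀)·g(t₀). Then the function t ↦ √(det g(t)) is differentiable at t₀ with derivative −(n/2)·p₀·√(det g(t₀)). (Local-coordinate form of the volume-density decay ∂/∂t dμ_g = −(n/2)·p·dμ_g along the conformal Ricci flow, the key step in the global and local volume decay results.) -/

import Mathlib

open Matrix

/-- The determinant as a continuous multilinear map in the rows. -/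
noncomputable def detCML (n : ℕ) :
    ContinuousMultilinearMap ℝ (fun _ : Fin n => (Fin n → ℝ)) ℝ :=
  MultilinearMap.mkContinuous
    ((Matrix.detRowAlternating : (Fin n → ℝ) [⋀^Fin n]→ₗ[ℝ] ℝ).toMultilinearMap)
    (Nat.factorial n) (by
      intro m
      show |(Matrix.of m).det| ≤ (Nat.factorial n : ℝ) * ∏ i, ‖m i‖
      rw [Matrix.det_apply]
      refine (Finset.abs_sum_le_sum_abs _ _).trans ?_
      have hcard : (Finset.univ : Finset (Equiv.Perm (Fin n))).card = Nat.factorial n := by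
        simp [Fintype.card_perm]
      calc (∑ σ : Equiv.Perm (Fin n), |Equiv.Perm.sign σ • ∏ i, Matrix.of m (σ i) i|)
          ≤ ∑ σ : Equiv.Perm (Fin n), ∏ i, ‖m i‖ := by
            refine Finset.sum_le_sum fun σ _ => ?_
            rw [Units.smul_def, zsmul_eq_mul, abs_mul]
            have h1 : |((Equiv.Perm.sign σ : ℤ) : ℝ)| = 1 := by
              rcases Int.units_eq_one_or (Equiv.Perm.sign σ) with h | h <;> simp [h]
            rw [h1, one_mul, Finset.abs_prod]
            calc (∏ i, |Matrix.of m (σ i) i|)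
                ≤ ∏ i, ‖m (σ i)‖ := by
                  refine Finset.prod_le_prod (fun i _ => abs_nonneg _) fun i _ => ?_
                  exact (norm_le_pi_norm (m (σ i)) i).trans_eq' rfl
              _ = ∏ i, ‖m i‖ := Equiv.prod_comp σ fun i => ‖m i‖
        _ = (Nat.factorial n : ℝ) * ∏ i, ‖m i‖ := by
            rw [Finset.sum_const, hcard, nsmul_eq_mul])

lemma detCML_apply (n : ℕ) (M : Matrix (Fin n) (Fin n) ℝ) :
    detCML n (fun i => M i) = M.det := rfl

/-- Jacobi-type formula for the linear derivative of the determinant. -/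
lemma sum_det_updateRow_eq_trace (n : ℕ) (A B : Matrix (Fin n) (Fin n) ℝ) :
    ∑ i, (A.updateRow i (B i)).det = Matrix.trace (A.adjugate * B) := by
  have key : ∀ i : Fin n, (A.updateRow i (B i)).det = ∑ j, B i j * A.adjugate j i := by
    intro i
    have hB : B i = ∑ j, B i j • (Pi.single j (1 : ℝ) : Fin n → ℝ) := by
      ext k
      simp [Pi.single_apply, eq_comm]
    set L := (Matrix.detRowAlternating :
        (Fin n → ℝ) [⋀^Fin n]→ₗ[ℝ] ℝ).toMultilinearMap.toLinearMap (fun k => A k) i with hL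
    have hLdef : ∀ v : Fin n → ℝ, L v = (A.updateRow i v).det := fun v => rfl
    calc (A.updateRow i (B i)).det = L (B i) := (hLdef _).symm
      _ = ∑ j, B i j * (A.updateRow i (Pi.single j (1 : ℝ))).det := by
          conv_lhs => rw [hB]
          rw [map_sum]
          exact Finset.sum_congr rfl fun j _ => by
            rw [_root_.map_smul, hLdef, smul_eq_mul]
      _ = ∑ j, B i j * A.adjugate j i := by
          exact Finset.sum_congr rfl fun j _ => by rw [Matrix.adjugate_apply]
  rw [Matrix.trace]
  rw [Finset.sum_congr rfl fun i _ => key i]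
  rw [Finset.sum_comm]
  refine Finset.sum_congr rfl fun j _ => ?_
  rw [Matrix.diag_apply, Matrix.mul_apply]
  exact Finset.sum_congr rfl fun i _ => mul_comm _ _

/-- Local-coordinate form of the volume-density decay `∂/∂t dμ_g = −(n/2)·p·dμ_g`
along the conformal Ricci flow: if `g′(t₀) = −2A₀ − (2/n + p₀)·g(t₀)` with
`tr_{g(t₀)} A₀ = −1` and `det g(t₀) > 0`, then `t ↦ √(det g(t))` has derivative
`−(n/2)·p₀·√(det g(t₀))` at `t₀`. -/
theorem conformal_ricci_volume_density_decay
    (n : ℕ) (hn : 1 ≤ n) (t₀ : ℝ)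
    (g : ℝ → Matrix (Fin n) (Fin n) ℝ) (g' A₀ : Matrix (Fin n) (Fin n) ℝ)
    (p₀ : ℝ)
    (hg : ∀ i j, HasDerivAt (fun t => g t i j) (g' i j) t₀)
    (hdet : 0 < (g t₀).det)
    (htr : Matrix.trace ((g t₀)⁻¹ * A₀) = -1)
    (hflow : g' = (-2 : ℝ) • A₀ - (2 / (n : ℝ) + p₀) • g t₀) :
    HasDerivAt (fun t => Real.sqrt ((g t).det))
      (-((n : ℝ) / 2) * p₀ * Real.sqrt ((g t₀).det)) t₀ := by
  classical
  set A := g t₀ with hA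
  have hdet0 : A.det ≠ 0 := ne_of_gt hdet
  -- derivative of t ↦ rows of g t
  have hG : HasDerivAt (fun t => (fun i => g t i)) (fun i => g' i) t₀ := by
    rw [hasDerivAt_pi]
    intro i
    rw [hasDerivAt_pi]
    intro j
    exact hg i j
  -- derivative of the determinant
  have hdetDeriv : HasDerivAt (fun t => (g t).det)
      ((detCML n).linearDeriv (fun i => A i) (fun i => g' i)) t₀ := by
    have := ((detCML n).hasFDerivAt (x := fun i => A i)).comp_hasDerivAt t₀ hG
    exact this
  -- identify the derivative
  have hld : (detCML n).linearDeriv (fun i => A i) (fun i => g' i)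
      = Matrix.trace (A.adjugate * g') := by
    rw [ContinuousMultilinearMap.linearDeriv_apply]
    rw [← sum_det_updateRow_eq_trace n A g']
    refine Finset.sum_congr rfl fun i _ => ?_
    rfl
  -- compute the trace
  have hAinv : A.adjugate = A.det • A⁻¹ := by
    rw [Matrix.inv_def, smul_smul, Ring.inverse_eq_inv, mul_inv_cancel₀ hdet0, one_smul]
  have hmulinv : A⁻¹ * A = 1 := Matrix.nonsing_inv_mul A (isUnit_iff_ne_zero.mpr hdet0)
  have htrace : Matrix.trace (A⁻¹ * g') = -(n : ℝ) * p₀ := by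
    rw [hflow, Matrix.mul_sub, Matrix.mul_smul, Matrix.mul_smul, hmulinv]
    rw [Matrix.trace_sub, Matrix.trace_smul, Matrix.trace_smul, htr, Matrix.trace_one, Fintype.card_fin]
    have hn' : (n : ℝ) ≠ 0 := Nat.cast_ne_zero.mpr (by omega)
    field_simp
    linear_combination (-2 - (n : ℝ) * p₀) * mul_inv_cancel₀ hn'
  have hD : Matrix.trace (A.adjugate * g') = A.det * (-(n : ℝ) * p₀) := by
    rw [hAinv, Matrix.smul_mul, Matrix.trace_smul, htrace, smul_eq_mul]
  rw [hld, hD] at hdetDeriv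
  -- compose with sqrt
  have hsqrt := (Real.hasDerivAt_sqrt hdet0).comp t₀ hdetDeriv
  refine hsqrt.congr_deriv ?_
  have hs : Real.sqrt A.det * Real.sqrt A.det = A.det := Real.mul_self_sqrt hdet.le
  have hspos : (0 : ℝ) < Real.sqrt A.det := Real.sqrt_pos.mpr hdet
  rw [← hs]
  field_simp
  linear_combination p₀ * Real.sq_sqrt (sq_nonneg (Real.sqrt A.det))
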